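/- Let k ≥ 1 and let D := D^0 be the naive convolution matrix with parameter μ = 0. If the p-th iterated matrix C_p of the Fuchsian system Y' = CY satisfies C_p^k = 0, then the (kp+1)-st iterated matrix of the naive convolution system Y' = DY satisfies D_{kp+1} = 0. -/

import Mathlib

/-- The iterated matrices of the system `Y' = C Y`: `iterMat d C 0 = C₁ = C` and
`iterMat d C m = C_{m+1} = ∂(C_m) + C_m · C`, where `∂ = d` is applied entrywise. -/
def iterMat {K : Type*} [Field K] {ι : Type*} [Fintype ι] [DecidableEq ι]
    (d : K → K) (C : Matrix ι ι K) : ℕ → Matrix ι ι K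
  | 0 => C
  | m + 1 => (iterMat d C m).map d + iterMat d C m * C

/-- The block matrix `B_k^μ`: zero outside the `k`-th block row, with `k`-th block row
`(A_1, …, A_{k-1}, A_k + μ·1, A_{k+1}, …, A_r)`. -/
def convBlock {K : Type*} [Field K] {n r : ℕ}
    (A : Fin r → Matrix (Fin n) (Fin n) K) (μ : K) (k : Fin r) :
    Matrix (Fin r × Fin n) (Fin r × Fin n) K :=
  fun p q =>
    if p.1 = k then A q.1 p.2 q.2 + (if q.1 = k ∧ p.2 = q.2 then μ else 0) else 0

section Aux

variable {K : Type*} [Field K] (d : K → K)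

theorem aux_d_zero (hd_add : ∀ a b : K, d (a + b) = d a + d b) : d 0 = 0 := by
  have h := hd_add 0 0
  rw [add_zero] at h
  exact (left_eq_add.mp h)

theorem aux_d_one (hd_mul : ∀ a b : K, d (a * b) = a * d b + d a * b) : d 1 = 0 := by
  have h := hd_mul 1 1
  rw [one_mul, one_mul, mul_one] at h
  exact (left_eq_add.mp h)

theorem aux_d_natCast (hd_add : ∀ a b : K, d (a + b) = d a + d b)
    (hd_mul : ∀ a b : K, d (a * b) = a * d b + d a * b) (m : ℕ) : d (m : K) = 0 := by
  induction m with
  | zero => simpa using aux_d_zero d hd_add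
  | succ m ih =>
    push_cast
    rw [hd_add, ih, aux_d_one d hd_mul, add_zero]

theorem aux_d_neg (hd_add : ∀ a b : K, d (a + b) = d a + d b) (x : K) : d (-x) = - d x := by
  have h := hd_add x (-x)
  rw [add_neg_cancel, aux_d_zero d hd_add] at h
  exact (eq_neg_of_add_eq_zero_right h.symm)

theorem aux_d_negOnePow (hd_add : ∀ a b : K, d (a + b) = d a + d b)
    (hd_mul : ∀ a b : K, d (a * b) = a * d b + d a * b) (m : ℕ) : d ((-1 : K) ^ m) = 0 := by
  induction m with
  | zero => simpa using aux_d_one d hd_mul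
  | succ m ih =>
    rw [pow_succ, hd_mul, ih, aux_d_neg d hd_add, aux_d_one d hd_mul]
    ring

theorem aux_d_iter_add (hd_add : ∀ a b : K, d (a + b) = d a + d b) (m : ℕ) (a b : K) :
    d^[m] (a + b) = d^[m] a + d^[m] b := by
  induction m generalizing a b with
  | zero => simp
  | succ m ih => simp only [Function.iterate_succ_apply, hd_add, ih]

theorem aux_d_iter_zero (hd_add : ∀ a b : K, d (a + b) = d a + d b) (m : ℕ) :
    d^[m] 0 = 0 :=
  Function.iterate_fixed (aux_d_zero d hd_add) m

theorem aux_d_iter_mul_const (hd_add : ∀ a b : K, d (a + b) = d a + d b)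
    (hd_mul : ∀ a b : K, d (a * b) = a * d b + d a * b)
    {c : K} (hc : d c = 0) (m : ℕ) (x : K) : d^[m] (x * c) = d^[m] x * c := by
  induction m generalizing x with
  | zero => simp
  | succ m ih =>
    rw [Function.iterate_succ_apply', ih, hd_mul, hc, mul_zero, zero_add,
      ← Function.iterate_succ_apply' d m x]

theorem aux_d_pow (hd_mul : ∀ a b : K, d (a * b) = a * d b + d a * b) (x : K) (m : ℕ) :
    d (x ^ (m + 1)) = ((m + 1 : ℕ) : K) * x ^ m * d x := by
  induction m with
  | zero => simp
  | succ m ih =>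
    rw [pow_succ, hd_mul, ih]
    push_cast
    ring

theorem aux_d_inv (hd_mul : ∀ a b : K, d (a * b) = a * d b + d a * b)
    {u : K} (hu : u ≠ 0) (hdu : d u = 1) :
    d u⁻¹ = -(u⁻¹ * u⁻¹) := by
  have h := hd_mul u u⁻¹
  rw [mul_inv_cancel₀ hu, aux_d_one d hd_mul, hdu, one_mul] at h
  have h2 : u * d u⁻¹ = -u⁻¹ := eq_neg_of_add_eq_zero_left h.symm
  calc d u⁻¹ = u⁻¹ * u * d u⁻¹ := by rw [inv_mul_cancel₀ hu, one_mul]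
    _ = u⁻¹ * (u * d u⁻¹) := by rw [mul_assoc]
    _ = -(u⁻¹ * u⁻¹) := by rw [h2, mul_neg]

theorem aux_d_iter_inv (hd_add : ∀ a b : K, d (a + b) = d a + d b)
    (hd_mul : ∀ a b : K, d (a * b) = a * d b + d a * b)
    {u : K} (hu : u ≠ 0) (hdu : d u = 1) (m : ℕ) :
    d^[m] u⁻¹ = ((-1 : K) ^ m * (m.factorial : K)) * u⁻¹ ^ (m + 1) := by
  induction m with
  | zero => simp
  | succ m ih =>
    rw [Function.iterate_succ_apply', ih, hd_mul, aux_d_pow d hd_mul]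
    have hdc : d ((-1:K)^m * (m.factorial : K)) = 0 := by
      rw [hd_mul, aux_d_natCast d hd_add hd_mul, aux_d_negOnePow d hd_add hd_mul]; ring
    rw [hdc, aux_d_inv d hd_mul hu hdu]
    push_cast [Nat.factorial_succ]
    ring

theorem aux_d_iterp_inv {p : ℕ} (hp : p.Prime) [CharP K p]
    (hd_add : ∀ a b : K, d (a + b) = d a + d b)
    (hd_mul : ∀ a b : K, d (a * b) = a * d b + d a * b)
    {u : K} (hu : u ≠ 0) (hdu : d u = 1) :
    d^[p] u⁻¹ = 0 := by
  rw [aux_d_iter_inv d hd_add hd_mul hu hdu p,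
    (CharP.cast_eq_zero_iff K p _).2 (Nat.dvd_factorial hp.pos le_rfl)]
  ring

theorem mapd_add {ι κ : Type*} (hd_add : ∀ a b : K, d (a + b) = d a + d b)
    (M N : Matrix ι κ K) : (M + N).map d = M.map d + N.map d := by
  ext i j
  simp [Matrix.map_apply, Matrix.add_apply, hd_add]

theorem mapd_sum {ι κ β : Type*} (hd_add : ∀ a b : K, d (a + b) = d a + d b)
    (s : Finset β) (f : β → Matrix ι κ K) :
    (∑ b ∈ s, f b).map d = ∑ b ∈ s, (f b).map d := by
  ext i j
  simp only [Matrix.map_apply, Matrix.sum_apply]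
  exact map_sum (AddMonoidHom.mk' d hd_add) _ s

theorem mapd_mul {ι κ γ : Type*} [Fintype κ]
    (hd_add : ∀ a b : K, d (a + b) = d a + d b)
    (hd_mul : ∀ a b : K, d (a * b) = a * d b + d a * b)
    (X : Matrix ι κ K) (Y : Matrix κ γ K) :
    (X * Y).map d = X * Y.map d + X.map d * Y := by
  ext i j
  simp only [Matrix.map_apply, Matrix.add_apply, Matrix.mul_apply]
  rw [show d = ⇑(AddMonoidHom.mk' d hd_add) from rfl, map_sum]
  rw [← Finset.sum_add_distrib]
  exact Finset.sum_congr rfl fun x _ => hd_mul _ _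

theorem mapd_smul {ι κ : Type*}
    (hd_mul : ∀ a b : K, d (a * b) = a * d b + d a * b)
    {a : K} (ha : d a = 0) (M : Matrix ι κ K) :
    (a • M).map d = a • M.map d := by
  ext i j
  simp only [Matrix.map_apply, Matrix.smul_apply, smul_eq_mul, hd_mul, ha]
  ring

theorem mapd_one {ι : Type*} [DecidableEq ι]
    (hd_add : ∀ a b : K, d (a + b) = d a + d b)
    (hd_mul : ∀ a b : K, d (a * b) = a * d b + d a * b) :
    (1 : Matrix ι ι K).map d = 0 := by
  ext i j
  by_cases h : i = j <;>
    simp [Matrix.map_apply, Matrix.one_apply, h, aux_d_one d hd_mul, aux_d_zero d hd_add]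

theorem mapd_iter {ι κ : Type*} (m : ℕ) (M : Matrix ι κ K) :
    (fun Z : Matrix ι κ K => Z.map d)^[m] M = M.map (d^[m]) := by
  induction m generalizing M with
  | zero => simp
  | succ m ih =>
    rw [Function.iterate_succ_apply, ih, Matrix.map_map, ← Function.iterate_succ d m]

theorem pascal_smul {M : Type*} [AddCommMonoid M] [Module K M] (F : ℕ → M) (m : ℕ) :
    ∑ i ∈ Finset.range (m+1), ((m.choose i : K)) • F i
      + ∑ i ∈ Finset.range (m+1), ((m.choose i : K)) • F (i+1)
    = ∑ i ∈ Finset.range (m+2), (((m+1).choose i : K)) • F i := by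
  have h1 : ∑ i ∈ Finset.range (m+2), (((m+1).choose i : K)) • F i
      = ∑ i ∈ Finset.range (m+1), (((m+1).choose (i+1) : K)) • F (i+1) + F 0 := by
    rw [Finset.sum_range_succ' (fun i => (((m+1).choose i : K)) • F i) (m+1)]
    simp
  have h2 : ∀ i, (((m+1).choose (i+1) : K)) • F (i+1)
      = ((m.choose i : K)) • F (i+1) + ((m.choose (i+1) : K)) • F (i+1) := by
    intro i
    rw [Nat.choose_succ_succ]
    push_cast
    rw [add_smul]
  have h3 : ∑ i ∈ Finset.range (m+1), ((m.choose i : K)) • F i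
      = ∑ i ∈ Finset.range m, ((m.choose (i+1) : K)) • F (i+1) + F 0 := by
    rw [Finset.sum_range_succ' (fun i => ((m.choose i : K)) • F i) m]
    simp
  have h4 : ∑ i ∈ Finset.range (m+1), ((m.choose (i+1) : K)) • F (i+1)
      = ∑ i ∈ Finset.range m, ((m.choose (i+1) : K)) • F (i+1) := by
    rw [Finset.sum_range_succ]
    simp [Nat.choose_succ_self]
  rw [h1]
  simp_rw [h2]
  rw [Finset.sum_add_distrib, h3, h4]
  abel

theorem genL {ι κ : Type*} [Fintype κ]
    (hd_add : ∀ a b : K, d (a + b) = d a + d b)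
    (hd_mul : ∀ a b : K, d (a * b) = a * d b + d a * b)
    (c : Matrix κ κ K) (X : Matrix ι κ K) (Y : Matrix κ κ K) (m : ℕ) :
    (fun Z : Matrix ι κ K => Z.map d + Z * c)^[m] (X * Y)
      = ∑ i ∈ Finset.range (m+1),
          ((m.choose i : K)) • (X.map (d^[m-i]) * (fun Z : Matrix κ κ K => Z.map d + Z * c)^[i] Y) := by
  induction m with
  | zero => simp
  | succ m ih =>
    rw [Function.iterate_succ_apply', ih]
    show (∑ i ∈ Finset.range (m+1), ((m.choose i : K)) •
            (X.map (d^[m-i]) * (fun Z : Matrix κ κ K => Z.map d + Z * c)^[i] Y)).map d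
        + (∑ i ∈ Finset.range (m+1), ((m.choose i : K)) •
            (X.map (d^[m-i]) * (fun Z : Matrix κ κ K => Z.map d + Z * c)^[i] Y)) * c = _
    set τB := fun Z : Matrix κ κ K => Z.map d + Z * c with hτB
    rw [mapd_sum d hd_add, Matrix.sum_mul, ← Finset.sum_add_distrib]
    have key : ∀ i ∈ Finset.range (m+1),
        (((m.choose i : K)) • (X.map (d^[m-i]) * τB^[i] Y)).map d
          + (((m.choose i : K)) • (X.map (d^[m-i]) * τB^[i] Y)) * c
        = ((m.choose i : K)) • (X.map (d^[m+1-i]) * τB^[i] Y)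
          + ((m.choose i : K)) • (X.map (d^[m-i]) * τB^[i+1] Y) := by
      intro i hi
      have hi' : i ≤ m := Nat.lt_succ_iff.mp (Finset.mem_range.mp hi)
      rw [mapd_smul d hd_mul (aux_d_natCast d hd_add hd_mul _),
        mapd_mul d hd_add hd_mul, Matrix.smul_mul, Matrix.map_map,
        show d ∘ d^[m-i] = d^[(m-i)+1] from (Function.iterate_succ' d (m-i)).symm,
        show (m-i)+1 = m+1-i from (Nat.succ_sub hi').symm,
        ← smul_add, ← smul_add]
      congr 1
      rw [Matrix.mul_assoc, add_comm (X.map d^[m - i] * (τB^[i] Y).map d), add_assoc,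
        ← Matrix.mul_add]
      congr 1
      rw [Function.iterate_succ_apply' τB i Y, hτB]
    rw [Finset.sum_congr rfl key, Finset.sum_add_distrib]
    have := pascal_smul (K := K) (F := fun i => X.map (d^[m+1-i]) * τB^[i] Y) (m := m)
    simp only [Nat.succ_sub_succ] at this ⊢
    exact this

theorem iterMat_eq {ι : Type*} [Fintype ι] [DecidableEq ι] (C : Matrix ι ι K) (m : ℕ) :
    iterMat d C m = (fun Z : Matrix ι ι K => Z.map d + Z * C)^[m] C := by
  induction m with
  | zero => rfl
  | succ m ih =>
    rw [iterMat, ih, ← Function.iterate_succ_apply' (fun Z : Matrix ι ι K => Z.map d + Z * C) m C]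

theorem tau_one_eq {ι : Type*} [Fintype ι] [DecidableEq ι]
    (hd_add : ∀ a b : K, d (a + b) = d a + d b)
    (hd_mul : ∀ a b : K, d (a * b) = a * d b + d a * b)
    (C : Matrix ι ι K) (m : ℕ) :
    (fun Z : Matrix ι ι K => Z.map d + Z * C)^[m+1] 1 = iterMat d C m := by
  induction m with
  | zero =>
    show (1 : Matrix ι ι K).map d + 1 * C = iterMat d C 0
    rw [mapd_one d hd_add hd_mul, Matrix.one_mul, zero_add]
    rfl
  | succ m ih =>
    rw [Function.iterate_succ_apply' _ (m+1) 1, ih]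
    show (iterMat d C m).map d + iterMat d C m * C = _
    rw [iterMat]

theorem mapd_iterp_mul {p : ℕ} (hp : p.Prime) [CharP K p] {ι κ : Type*} [Fintype κ]
    (hd_add : ∀ a b : K, d (a + b) = d a + d b)
    (hd_mul : ∀ a b : K, d (a * b) = a * d b + d a * b)
    (X : Matrix ι κ K) (Y : Matrix κ κ K)
    (hX : X.map (d^[p]) = 0) (hY : Y.map (d^[p]) = 0) :
    (X * Y).map (d^[p]) = 0 := by
  have h0A : (fun Z : Matrix ι κ K => Z.map d + Z * (0 : Matrix κ κ K))
      = fun Z : Matrix ι κ K => Z.map d := by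
    funext Z; simp
  have h0B : (fun Z : Matrix κ κ K => Z.map d + Z * (0 : Matrix κ κ K))
      = fun Z : Matrix κ κ K => Z.map d := by
    funext Z; simp
  have h := genL d hd_add hd_mul (0 : Matrix κ κ K) X Y p
  rw [h0A, h0B, mapd_iter] at h
  rw [h]
  apply Finset.sum_eq_zero
  intro i hi
  rw [mapd_iter]
  rcases eq_or_ne i 0 with h0 | h0
  · subst h0
    rw [Nat.sub_zero, hX, Matrix.zero_mul, smul_zero]
  rcases eq_or_ne i p with hip | hip
  · subst hip
    rw [hY, Matrix.mul_zero, smul_zero]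
  · have hlt : i < p := lt_of_le_of_ne (Nat.lt_succ_iff.mp (Finset.mem_range.mp hi)) hip
    rw [(CharP.cast_eq_zero_iff K p _).2 (hp.dvd_choose_self h0 hlt), zero_smul]

end Aux

/-- If `C_p^k = 0` for the Fuchsian system `C = ∑ (t - tᵢ)⁻¹ Aᵢ`, then `D_{kp+1} = 0`
for the naive convolution `D = D^0 = ∑ (t - t_k)⁻¹ B_k^0` with parameter `μ = 0`. -/
theorem naive_convolution_iterated_matrix_vanishes
    {K : Type*} [Field K] {p : ℕ} (hp : p.Prime) [CharP K p]
    (d : K → K) (hd_add : ∀ a b : K, d (a + b) = d a + d b)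
    (hd_mul : ∀ a b : K, d (a * b) = a * d b + d a * b)
    {n r : ℕ} (t : K) (ht : d t = 1)
    (ts : Fin r → K) (hts : ∀ i, d (ts i) = 0)
    (hdist : Function.Injective ts) (htne : ∀ i, t ≠ ts i)
    (A : Fin r → Matrix (Fin n) (Fin n) K) (hA : ∀ i a b, d (A i a b) = 0)
    (k : ℕ) (hk : 1 ≤ k)
    (hC : (iterMat d (∑ i, (t - ts i)⁻¹ • A i) (p - 1)) ^ k = 0) :
    iterMat d (∑ j, (t - ts j)⁻¹ • convBlock A (0 : K) j) (k * p) = 0 := by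
  classical
  set C : Matrix (Fin n) (Fin n) K := ∑ i, (t - ts i)⁻¹ • A i with hCdef
  set D : Matrix (Fin r × Fin n) (Fin r × Fin n) K :=
    ∑ j, (t - ts j)⁻¹ • convBlock A (0 : K) j with hDdef
  have hdt : ∀ i, d (t - ts i) = 1 := by
    intro i
    have h := hd_add (t - ts i) (ts i)
    rw [sub_add_cancel, hts i, add_zero, ht] at h
    exact h.symm
  have hne : ∀ i, t - ts i ≠ 0 := fun i => sub_ne_zero_of_ne (htne i)
  have hgp : ∀ i, d^[p] ((t - ts i)⁻¹) = 0 := fun i =>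
    aux_d_iterp_inv d hp hd_add hd_mul (hne i) (hdt i)
  set Pi : Matrix (Fin n) (Fin r × Fin n) K := Matrix.of fun a q => A q.1 a q.2 with hPi
  set V : Matrix (Fin r × Fin n) (Fin n) K :=
    Matrix.of fun q b => if q.2 = b then (t - ts q.1)⁻¹ else 0 with hV
  have hVPi : V * Pi = D := by
    ext ⟨j, a⟩ ⟨b, c⟩
    rw [hDdef]
    simp only [Matrix.mul_apply, hV, hPi, Matrix.of_apply, Matrix.sum_apply, Matrix.smul_apply,
      smul_eq_mul, convBlock, ite_self, add_zero, ite_mul, mul_ite, zero_mul, mul_zero,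
      Finset.sum_ite_eq, Finset.mem_univ, if_true]
  have hPiV : Pi * V = C := by
    ext a b
    rw [hCdef]
    simp only [Matrix.mul_apply, hV, hPi, Matrix.of_apply, Matrix.sum_apply, Matrix.smul_apply,
      smul_eq_mul, Fintype.sum_prod_type, mul_ite, mul_zero, Finset.sum_ite_eq',
      Finset.mem_univ, if_true]
    exact Finset.sum_congr rfl fun j _ => mul_comm _ _
  have hPid : Pi.map d = 0 := by
    ext a q
    simp [Matrix.map_apply, hPi, hA]
  have hVz : V.map (d^[p]) = 0 := by
    ext q b
    simp only [Matrix.map_apply, hV, Matrix.of_apply, Matrix.zero_apply]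
    split
    · exact hgp q.1
    · exact aux_d_iter_zero d hd_add p
  have hCz : C.map (d^[p]) = 0 := by
    ext a b
    rw [hCdef]
    simp only [Matrix.map_apply, Matrix.sum_apply, Matrix.smul_apply, smul_eq_mul,
      Matrix.zero_apply]
    rw [show (d^[p]) = ⇑(AddMonoidHom.mk' (d^[p]) (aux_d_iter_add d hd_add p)) from rfl, map_sum]
    apply Finset.sum_eq_zero
    intro i _
    show d^[p] ((t - ts i)⁻¹ * A i a b) = 0
    rw [aux_d_iter_mul_const d hd_add hd_mul (hA i a b) p, hgp i, zero_mul]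
  have hPiD : Pi * D = C * Pi := by rw [← hVPi, ← Matrix.mul_assoc, hPiV]
  -- reduction lemma
  have hred : ∀ m, (fun Z : Matrix (Fin r × Fin n) (Fin r × Fin n) K => Z.map d + Z * D)^[m] (V * Pi)
      = ((fun Z : Matrix (Fin r × Fin n) (Fin n) K => Z.map d + Z * C)^[m] V) * Pi := by
    intro m
    induction m with
    | zero => rfl
    | succ m ih =>
      rw [Function.iterate_succ_apply', ih, Function.iterate_succ_apply']
      show ((fun Z : Matrix (Fin r × Fin n) (Fin n) K => Z.map d + Z * C)^[m] V * Pi).map d + ((fun Z : Matrix (Fin r × Fin n) (Fin n) K => Z.map d + Z * C)^[m] V * Pi) * D = _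
      rw [mapd_mul d hd_add hd_mul, hPid, Matrix.mul_zero, zero_add,
        Matrix.mul_assoc, hPiD, ← Matrix.mul_assoc, ← Matrix.add_mul]
  -- σ^[p] on killed matrices
  have hsigp : ∀ X : Matrix (Fin r × Fin n) (Fin n) K, X.map (d^[p]) = 0 →
      (fun Z : Matrix (Fin r × Fin n) (Fin n) K => Z.map d + Z * C)^[p] X
        = X * iterMat d C (p - 1) := by
    intro X hX
    have h := genL d hd_add hd_mul C X 1 p
    rw [Matrix.mul_one] at h
    rw [h, Finset.sum_range_succ]
    have hrest : ∑ i ∈ Finset.range p, ((p.choose i : K)) •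
        (X.map (d^[p-i]) * (fun Z : Matrix (Fin n) (Fin n) K => Z.map d + Z * C)^[i] 1) = 0 := by
      apply Finset.sum_eq_zero
      intro i hi
      rcases eq_or_ne i 0 with h0 | h0
      · subst h0
        rw [Nat.sub_zero, hX, Matrix.zero_mul, smul_zero]
      · rw [(CharP.cast_eq_zero_iff K p _).2 (hp.dvd_choose_self h0 (Finset.mem_range.mp hi)),
          zero_smul]
    have hp1 : p - 1 + 1 = p := Nat.succ_pred_eq_of_pos hp.pos
    have h1 := tau_one_eq d hd_add hd_mul C (p - 1)
    rw [hp1] at h1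
    rw [hrest, zero_add, Nat.choose_self, Nat.sub_self, Function.iterate_zero, Matrix.map_id,
      h1, Nat.cast_one, one_smul]
  -- entries of σ^[m] V are killed by d^[p]
  have hZ : ∀ m, ((fun Z : Matrix (Fin r × Fin n) (Fin n) K => Z.map d + Z * C)^[m] V).map (d^[p]) = 0 := by
    intro m
    induction m with
    | zero => exact hVz
    | succ m ih =>
      rw [Function.iterate_succ_apply']
      show (((fun Z : Matrix (Fin r × Fin n) (Fin n) K => Z.map d + Z * C)^[m] V).map d
        + ((fun Z : Matrix (Fin r × Fin n) (Fin n) K => Z.map d + Z * C)^[m] V) * C).map (d^[p]) = 0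
      rw [mapd_add (d^[p]) (aux_d_iter_add d hd_add p),
        mapd_iterp_mul d hp hd_add hd_mul _ C ih hCz, add_zero, Matrix.map_map]
      have hcomm : (d^[p]) ∘ d = d ∘ (d^[p]) := by
        funext x
        exact (Function.iterate_succ_apply d p x).symm.trans (Function.iterate_succ_apply' d p x)
      rw [hcomm, ← Matrix.map_map, ih, Matrix.map_zero d (aux_d_zero d hd_add)]
  -- main induction
  have hmain : ∀ l, (fun Z : Matrix (Fin r × Fin n) (Fin n) K => Z.map d + Z * C)^[l * p] V
      = V * (iterMat d C (p - 1)) ^ l := by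
    intro l
    induction l with
    | zero => simp
    | succ l ih =>
      rw [show (l+1) * p = p + l * p from by ring, Function.iterate_add_apply,
        hsigp _ (hZ (l * p)), ih, Matrix.mul_assoc, ← pow_succ]
  have hred' := hred (k * p)
  rw [hVPi] at hred'
  rw [iterMat_eq d D (k * p), hred', hmain k, hC, Matrix.mul_zero, Matrix.zero_mul]
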